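/- arXiv:1804.01362 — 3 statements merged into one kernel-verified Lean document; each statement's English description precedes it below -/
import Mathlib

section
/- Let J be a g-function and put m := max{J(qz) : q∈𝒜, z∈Ω}. Then m<1, and for every bounded Borel a:Ω→ℂ, every s>1, every k≥1 and every x∈Ω one has Σ_{w∈𝒜^k} |a(wx)| 𝕁(wx)^s ≤ ‖a‖_∞ · m^{(s−1)k}; consequently ζ₊(s) converges absolutely for every s>1. If moreover log J is α-Hölder and a:Ω→[0,∞) is continuous and not identically zero, then Σ_{k≥1} (L_{log J}^k a)(x) = +∞ for every x∈Ω; thus s=1 is the abscissa of convergence of ζ₊. -/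
open Real MeasureTheory Filter Topology Set

open scoped Classical

namespace GS

/-- The full shift space `Ω = 𝒜^ℕ`. -/
abbrev Omega (𝒜 : Type) : Type := ℕ → 𝒜

variable {𝒜 : Type}

/-- The left shift `σ(x₁,x₂,…) = (x₂,x₃,…)`. -/
def shift (x : Omega 𝒜) : Omega 𝒜 := fun n => x (n + 1)

/-- Prepending a symbol: `qx = (q,x₁,x₂,…)`. -/
def cons (q : 𝒜) (x : Omega 𝒜) : Omega 𝒜 := fun n => Nat.casesOn n q x

/-- Concatenation `wx` of a finite word `w ∈ 𝒜^k` with `x ∈ Ω`. -/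
def concat {k : ℕ} (w : Fin k → 𝒜) (x : Omega 𝒜) : Omega 𝒜 :=
  fun n => if h : n < k then w ⟨n, h⟩ else x (n - k)

/-- The metric `d(x,y) = 2^{-N(x,y)}`, `N(x,y) = inf{k ≥ 1 : x_k ≠ y_k}`
(sequences are indexed from `0` in Lean, whence the `+ 1`). -/
noncomputable def dOmega (x y : Omega 𝒜) : ℝ :=
  if x = y then 0 else (1 / 2 : ℝ) ^ (sInf {k : ℕ | x k ≠ y k} + 1)

/-- `a : Ω → E` is `α`-Hölder (w.r.t. `dOmega`):
`Hol_α(a) = sup_{x≠y} ‖a x - a y‖ / d(x,y)^α < ∞`. -/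
def IsHolderW (α : ℝ) {E : Type*} [NormedAddCommGroup E] (a : Omega 𝒜 → E) : Prop :=
  ∃ C : ℝ, ∀ x y : Omega 𝒜, ‖a x - a y‖ ≤ C * (dOmega x y) ^ α

/-- The Hölder constant `Hol_α(a) = sup_{x≠y} ‖a x - a y‖ / d(x,y)^α`. -/
noncomputable def HolConst (α : ℝ) {E : Type*} [NormedAddCommGroup E] (a : Omega 𝒜 → E) : ℝ :=
  sSup {r : ℝ | ∃ x y : Omega 𝒜, x ≠ y ∧ r = ‖a x - a y‖ / (dOmega x y) ^ α}

/-- `J` is a `g`-function: continuous, strictly positive, with `∑_{q∈𝒜} J(qx) = 1`. -/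
def IsGFunction [Fintype 𝒜] [TopologicalSpace 𝒜] (J : Omega 𝒜 → ℝ) : Prop :=
  Continuous J ∧ (∀ x, 0 < J x) ∧ ∀ x : Omega 𝒜, ∑ q : 𝒜, J (cons q x) = 1

/-- The Ruelle transfer operator `(L_f φ)(x) = ∑_{q∈𝒜} e^{f(qx)} φ(qx)`. -/
noncomputable def ruelle [Fintype 𝒜] {E : Type*} [AddCommMonoid E] [Module ℝ E]
    (f : Omega 𝒜 → ℝ) (φ : Omega 𝒜 → E) : Omega 𝒜 → E :=
  fun x => ∑ q : 𝒜, Real.exp (f (cons q x)) • φ (cons q x)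

/-- Birkhoff sum `S_k(f) = ∑_{j=0}^{k-1} f ∘ σ^j`. -/
def birkhoff (f : Omega 𝒜 → ℝ) (k : ℕ) (x : Omega 𝒜) : ℝ :=
  ∑ j ∈ Finset.range k, f (shift^[j] x)

/-- `𝕁(wx) = exp (S_k(log J)(wx))` for a word `w` of length `k`. -/
noncomputable def JBirk (J : Omega 𝒜 → ℝ) (k : ℕ) (w : Fin k → 𝒜) (x : Omega 𝒜) : ℝ :=
  Real.exp (birkhoff (fun z => Real.log (J z)) k (concat w x))

/-- `ζ₊(s) = ∑_{k≥1} ∑_{w∈𝒜^k} a(wx) 𝕁(wx)^s`. -/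
noncomputable def zetaPlus [Fintype 𝒜] (J : Omega 𝒜 → ℝ) (a : Omega 𝒜 → ℂ) (x : Omega 𝒜)
    (s : ℝ) : ℂ :=
  ∑' k : ℕ, ∑ w : Fin (k + 1) → 𝒜, a (concat w x) * (((JBirk J (k + 1) w x) ^ s : ℝ) : ℂ)

/-- `ζ₋(s) = ∑_{k≥1} ∑_{w∈𝒜^k} a(wy) 𝕁(wx)^s`. -/
noncomputable def zetaMinus [Fintype 𝒜] (J : Omega 𝒜 → ℝ) (a : Omega 𝒜 → ℂ) (x y : Omega 𝒜)
    (s : ℝ) : ℂ :=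
  ∑' k : ℕ, ∑ w : Fin (k + 1) → 𝒜, a (concat w y) * (((JBirk J (k + 1) w x) ^ s : ℝ) : ℂ)

/-- `L_{log J}^* μ = μ`, i.e. `μ` is a `g`-measure of `J`, tested against continuous functions. -/
def IsGMeasure [Fintype 𝒜] [TopologicalSpace 𝒜] [MeasurableSpace 𝒜]
    (J : Omega 𝒜 → ℝ) (μ : Measure (Omega 𝒜)) : Prop :=
  IsProbabilityMeasure μ ∧
    ∀ φ : Omega 𝒜 → ℂ, Continuous φ →
      ∫ x, ruelle (fun z => Real.log (J z)) φ x ∂μ = ∫ x, φ x ∂μ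

/-- The cylinder set determined by a finite word. -/
def cyl {k : ℕ} (w : Fin k → 𝒜) : Set (Omega 𝒜) := {x | ∀ i : Fin k, x (i : ℕ) = w i}

/-- Entropy of the partition into cylinders of length `n`. -/
noncomputable def blockEntropy [Fintype 𝒜] [MeasurableSpace 𝒜] (μ : Measure (Omega 𝒜))
    (n : ℕ) : ℝ :=
  ∑ w : Fin n → 𝒜, Real.negMulLog (μ (cyl w)).toReal

/-- Kolmogorov–Sinai entropy `h_μ(σ)` of a shift-invariant measure, computed through the
generating partition into cylinders: `h_μ(σ) = lim_n H_n/n = inf_{n≥1} H_n/n`. -/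
noncomputable def KSentropy [Fintype 𝒜] [MeasurableSpace 𝒜] (μ : Measure (Omega 𝒜)) : ℝ :=
  ⨅ n : ℕ, blockEntropy μ (n + 1) / (n + 1)

/-- Topological pressure `P(f) = sup {h_μ(σ) + ∫ f dμ}` over shift-invariant Borel
probability measures. -/
noncomputable def pressure [Fintype 𝒜] [MeasurableSpace 𝒜] (f : Omega 𝒜 → ℝ) : ℝ :=
  sSup {r : ℝ | ∃ μ : Measure (Omega 𝒜), IsProbabilityMeasure μ ∧
    Measure.map shift μ = μ ∧ r = KSentropy μ + ∫ x, f x ∂μ}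

/-- `μ` is an equilibrium state of `f`. -/
def IsEquilibrium [Fintype 𝒜] [MeasurableSpace 𝒜] (f : Omega 𝒜 → ℝ)
    (μ : Measure (Omega 𝒜)) : Prop :=
  IsProbabilityMeasure μ ∧ Measure.map shift μ = μ ∧
    KSentropy μ + ∫ x, f x ∂μ = pressure f

/-- The Walters class `W(Ω,σ)`:
`sup_{n≥1} sup_{w∈𝒜^n} |S_n(f)(wx) − S_n(f)(wy)| → 0` as `d(x,y) → 0`. -/
def WaltersClass [TopologicalSpace 𝒜] (f : Omega 𝒜 → ℝ) : Prop :=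
  Continuous f ∧ ∀ ε > (0:ℝ), ∃ δ > (0:ℝ), ∀ x y : Omega 𝒜, dOmega x y < δ →
    ∀ (n : ℕ) (w : Fin n → 𝒜),
      |birkhoff f n (concat w x) - birkhoff f n (concat w y)| ≤ ε

/-- The set `W*` of finite (nonempty) words over `𝒜`. -/
def Words (𝒜 : Type) : Type := Σ k : ℕ, Fin (k + 1) → 𝒜

end GS
namespace GS

/-- `m = max{J(qz) : q ∈ 𝒜, z ∈ Ω}`. -/
noncomputable def supJ {𝒜 : Type} (J : Omega 𝒜 → ℝ) : ℝ :=
  sSup (Set.range fun p : 𝒜 × Omega 𝒜 => J (cons p.1 p.2))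

section Aux

variable {𝒜 : Type}

lemma shift_cons (q : 𝒜) (x : Omega 𝒜) : shift (cons q x) = x := rfl

lemma cons_zero_shift (y : Omega 𝒜) : cons (y 0) (shift y) = y := by
  funext n; cases n <;> rfl

lemma concat_nil (w : Fin 0 → 𝒜) (x : Omega 𝒜) : concat w x = x := by
  funext n; simp [concat]

lemma concat_cons (q : 𝒜) {k : ℕ} (w : Fin k → 𝒜) (x : Omega 𝒜) :
    concat (Fin.cons q w) x = cons q (concat w x) := by
  funext n
  cases n with
  | zero => simp [concat, cons]
  | succ m =>
    show concat (Fin.cons q w) x (m + 1) = concat w x m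
    simp only [concat]
    by_cases h : m < k
    · rw [dif_pos h, dif_pos (show m + 1 < k + 1 from Nat.succ_lt_succ h)]
      exact Fin.cons_succ (α := fun _ : Fin (k + 1) => 𝒜) q w ⟨m, h⟩
    · rw [dif_neg h, dif_neg (show ¬ m + 1 < k + 1 by omega)]
      congr 1
      omega

lemma birkhoff_succ (f : Omega 𝒜 → ℝ) (k : ℕ) (y : Omega 𝒜) :
    birkhoff f (k + 1) y = f y + birkhoff f k (shift y) := by
  unfold birkhoff
  rw [Finset.sum_range_succ']
  simp only [Function.iterate_succ_apply, Function.iterate_zero_apply]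
  ring

lemma JBirk_cons {J : Omega 𝒜 → ℝ} (hpos : ∀ z, 0 < J z) (q : 𝒜) {k : ℕ}
    (w : Fin k → 𝒜) (x : Omega 𝒜) :
    JBirk J (k + 1) (Fin.cons q w) x = J (cons q (concat w x)) * JBirk J k w x := by
  unfold JBirk
  rw [concat_cons, birkhoff_succ, Real.exp_add, shift_cons, Real.exp_log (hpos _)]

lemma sum_fin_succ_fun [Fintype 𝒜] {M : Type*} [AddCommMonoid M] {k : ℕ}
    (g : (Fin (k + 1) → 𝒜) → M) :
    ∑ w : Fin (k + 1) → 𝒜, g w = ∑ q : 𝒜, ∑ w : Fin k → 𝒜, g (Fin.cons q w) := by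
  rw [← Equiv.sum_comp (Fin.consEquiv fun _ => 𝒜) g, Fintype.sum_prod_type]
  rfl

lemma sum_JBirk [Fintype 𝒜] {J : Omega 𝒜 → ℝ} (hpos : ∀ z, 0 < J z)
    (hnorm : ∀ x : Omega 𝒜, ∑ q : 𝒜, J (cons q x) = 1) :
    ∀ (k : ℕ) (x : Omega 𝒜), ∑ w : Fin k → 𝒜, JBirk J k w x = 1 := by
  intro k
  induction k with
  | zero => intro x; simp [JBirk, birkhoff]
  | succ k ih =>
    intro x
    rw [sum_fin_succ_fun]
    simp only [JBirk_cons hpos]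
    rw [Finset.sum_comm]
    calc ∑ w : Fin k → 𝒜, ∑ q : 𝒜, J (cons q (concat w x)) * JBirk J k w x
        = ∑ w : Fin k → 𝒜, JBirk J k w x := by
          refine Finset.sum_congr rfl fun w _ => ?_
          rw [← Finset.sum_mul, hnorm, one_mul]
      _ = 1 := ih x

lemma ruelle_iter [Fintype 𝒜] {J : Omega 𝒜 → ℝ} (hpos : ∀ z, 0 < J z) :
    ∀ (k : ℕ) (a : Omega 𝒜 → ℝ) (x : Omega 𝒜),
      (ruelle (fun z => Real.log (J z)))^[k] a x
        = ∑ w : Fin k → 𝒜, a (concat w x) * JBirk J k w x := by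
  intro k
  induction k with
  | zero => intro a x; simp [JBirk, birkhoff, concat_nil]
  | succ k ih =>
    intro a x
    rw [Function.iterate_succ_apply, ih]
    rw [sum_fin_succ_fun (fun w : Fin (k + 1) → 𝒜 => a (concat w x) * JBirk J (k + 1) w x),
      Finset.sum_comm]
    refine Finset.sum_congr rfl fun w _ => ?_
    simp only [JBirk_cons hpos, concat_cons, ruelle, smul_eq_mul, Real.exp_log (hpos _)]
    rw [Finset.sum_mul]
    refine Finset.sum_congr rfl fun q _ => ?_
    ring

end Aux

/-- abscissa of convergence of `ζ₊`.
For a `g`-function `J`, `m := max J < 1`; for bounded Borel `a`, `s > 1`, `k ≥ 1`: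
`∑_{w ∈ 𝒜^k} |a(wx)| 𝕁(wx)^s ≤ ‖a‖_∞ m^{(s−1)k}`, so `ζ₊(s)` converges absolutely; and if
`log J` is `α`-Hölder and `a ≥ 0` is continuous, `a ≠ 0`, then `∑_{k≥1} (L_{log J}^k a)(x) = ∞`,
so `s = 1` is the abscissa of convergence of `ζ₊`. -/
theorem statement6 {𝒜 : Type} [Fintype 𝒜] [TopologicalSpace 𝒜] [DiscreteTopology 𝒜]
    [MeasurableSpace 𝒜] [BorelSpace 𝒜] (hcard : 2 ≤ Fintype.card 𝒜)
    (J : Omega 𝒜 → ℝ) (hJ : IsGFunction J) :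
    supJ J < 1 ∧
    (∀ a : Omega 𝒜 → ℂ, Measurable a → (∃ M : ℝ, ∀ z, ‖a z‖ ≤ M) →
      ∀ s : ℝ, 1 < s → ∀ (k : ℕ) (x : Omega 𝒜),
        ∑ w : Fin (k + 1) → 𝒜, ‖a (concat w x)‖ * (JBirk J (k + 1) w x) ^ s
          ≤ (⨆ z : Omega 𝒜, ‖a z‖) * supJ J ^ ((s - 1) * ((k : ℝ) + 1))) ∧
    (∀ a : Omega 𝒜 → ℂ, Measurable a → (∃ M : ℝ, ∀ z, ‖a z‖ ≤ M) →
      ∀ s : ℝ, 1 < s → ∀ x : Omega 𝒜,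
        Summable (fun k : ℕ =>
          ∑ w : Fin (k + 1) → 𝒜, ‖a (concat w x)‖ * (JBirk J (k + 1) w x) ^ s)) ∧
    (∀ α ∈ Set.Ioo (0 : ℝ) 1, IsHolderW α (fun z => Real.log (J z)) →
      ∀ a : Omega 𝒜 → ℝ, Continuous a → (∀ z, 0 ≤ a z) → (∃ z, a z ≠ 0) →
        ∀ x : Omega 𝒜,
          ¬ Summable (fun k : ℕ => (ruelle (fun z => Real.log (J z)))^[k + 1] a x)) := by
  obtain ⟨hJc, hJpos, hJsum⟩ := hJ
  have hA : Nonempty 𝒜 := Fintype.card_pos_iff.mp (by omega)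
  haveI := hA
  obtain ⟨q0⟩ := id hA
  set y0 : Omega 𝒜 := fun _ => q0 with hy0
  set m := supJ J with hm
  have hconsc : Continuous fun p : 𝒜 × Omega 𝒜 => cons p.1 p.2 := by
    apply continuous_pi
    intro n
    cases n with
    | zero => exact continuous_fst
    | succ k => exact (continuous_apply k).comp continuous_snd
  have hJc2 : Continuous fun p : 𝒜 × Omega 𝒜 => J (cons p.1 p.2) := hJc.comp hconsc
  have hbddJ : BddAbove (Set.range fun p : 𝒜 × Omega 𝒜 => J (cons p.1 p.2)) :=
    (isCompact_range hJc2).bddAbove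
  have hJm : ∀ y : Omega 𝒜, J y ≤ m := by
    intro y
    have h : J y = J (cons (y 0) (shift y)) := by rw [cons_zero_shift]
    rw [h]
    exact le_csSup hbddJ ⟨(y 0, shift y), rfl⟩
  have hmpos : 0 < m := lt_of_lt_of_le (hJpos y0) (hJm y0)
  have hm1 : m < 1 := by
    obtain ⟨p, -, hp⟩ := isCompact_univ.exists_isMaxOn ⟨(q0, y0), trivial⟩ hJc2.continuousOn
    have hmle : m ≤ J (cons p.1 p.2) :=
      csSup_le (Set.range_nonempty _) (by rintro r ⟨p', rfl⟩; exact isMaxOn_iff.mp hp p' trivial)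
    obtain ⟨q1, hq1⟩ := Fintype.exists_ne_of_one_lt_card (by omega) p.1
    have h2 : J (cons p.1 p.2) + J (cons q1 p.2) ≤ 1 := by
      rw [← hJsum p.2]
      have h3 := Finset.sum_le_sum_of_subset_of_nonneg
        (Finset.subset_univ ({p.1, q1} : Finset 𝒜)) (fun i _ _ => (hJpos (cons i p.2)).le)
      simpa [Finset.sum_pair (Ne.symm hq1)] using h3
    have h4 := hJpos (cons q1 p.2)
    linarith
  have hJBpos : ∀ (k : ℕ) (w : Fin k → 𝒜) (x : Omega 𝒜), 0 < JBirk J k w x :=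
    fun k w x => Real.exp_pos _
  have hJBle : ∀ (k : ℕ) (w : Fin k → 𝒜) (x : Omega 𝒜), JBirk J k w x ≤ m ^ k := by
    intro k w x
    have h1 : birkhoff (fun z => Real.log (J z)) k (concat w x) ≤ (k : ℝ) * Real.log m := by
      unfold birkhoff
      calc ∑ j ∈ Finset.range k, Real.log (J (shift^[j] (concat w x)))
          ≤ ∑ j ∈ Finset.range k, Real.log m :=
            Finset.sum_le_sum fun j _ => Real.log_le_log (hJpos _) (hJm _)
        _ = (k : ℝ) * Real.log m := by rw [Finset.sum_const, Finset.card_range, nsmul_eq_mul]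
    calc JBirk J k w x ≤ Real.exp ((k : ℝ) * Real.log m) := Real.exp_le_exp.mpr h1
      _ = m ^ k := by rw [← Real.log_pow, Real.exp_log (pow_pos hmpos k)]
  have part2 : ∀ a : Omega 𝒜 → ℂ, Measurable a → (∃ M : ℝ, ∀ z, ‖a z‖ ≤ M) →
      ∀ s : ℝ, 1 < s → ∀ (k : ℕ) (x : Omega 𝒜),
        ∑ w : Fin (k + 1) → 𝒜, ‖a (concat w x)‖ * (JBirk J (k + 1) w x) ^ s
          ≤ (⨆ z : Omega 𝒜, ‖a z‖) * m ^ ((s - 1) * ((k : ℝ) + 1)) := by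
    rintro a - ⟨M, hM⟩ s hs k x
    have hbdd' : BddAbove (Set.range fun z : Omega 𝒜 => ‖a z‖) :=
      ⟨M, by rintro r ⟨z, rfl⟩; exact hM z⟩
    set S := ⨆ z : Omega 𝒜, ‖a z‖ with hS
    have hSz : ∀ z, ‖a z‖ ≤ S := fun z => le_ciSup hbdd' z
    have hS0 : 0 ≤ S := le_trans (norm_nonneg _) (hSz y0)
    have key : ∀ w : Fin (k + 1) → 𝒜,
        ‖a (concat w x)‖ * JBirk J (k + 1) w x ^ s
          ≤ S * m ^ ((s - 1) * ((k : ℝ) + 1)) * JBirk J (k + 1) w x := by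
      intro w
      set t := JBirk J (k + 1) w x with ht
      have htpos : 0 < t := hJBpos _ _ _
      have h1 : t ^ s = t ^ (s - 1) * t := by
        rw [← Real.rpow_add_one htpos.ne' (s - 1), sub_add_cancel]
      have h2 : t ^ (s - 1) ≤ m ^ ((s - 1) * ((k : ℝ) + 1)) := by
        have h3 : t ^ (s - 1) ≤ (m ^ (k + 1 : ℕ)) ^ (s - 1) :=
          Real.rpow_le_rpow htpos.le (hJBle (k + 1) w x) (by linarith)
        refine h3.trans_eq ?_
        rw [← Real.rpow_natCast m (k + 1), ← Real.rpow_mul hmpos.le]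
        congr 1
        push_cast
        ring
      calc ‖a (concat w x)‖ * t ^ s = ‖a (concat w x)‖ * t ^ (s - 1) * t := by
            rw [h1, mul_assoc]
        _ ≤ S * m ^ ((s - 1) * ((k : ℝ) + 1)) * t := by
            refine mul_le_mul_of_nonneg_right ?_ htpos.le
            exact mul_le_mul (hSz _) h2 (Real.rpow_nonneg htpos.le _) hS0
    calc ∑ w : Fin (k + 1) → 𝒜, ‖a (concat w x)‖ * JBirk J (k + 1) w x ^ s
        ≤ ∑ w : Fin (k + 1) → 𝒜, S * m ^ ((s - 1) * ((k : ℝ) + 1)) * JBirk J (k + 1) w x :=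
          Finset.sum_le_sum fun w _ => key w
      _ = S * m ^ ((s - 1) * ((k : ℝ) + 1)) * ∑ w : Fin (k + 1) → 𝒜, JBirk J (k + 1) w x := by
          rw [Finset.mul_sum]
      _ = S * m ^ ((s - 1) * ((k : ℝ) + 1)) := by rw [sum_JBirk hJpos hJsum, mul_one]
  refine ⟨hm1, part2, ?_, ?_⟩
  · -- summability
    intro a ha hMa s hs x
    have hterm : ∀ k : ℕ, 0 ≤ ∑ w : Fin (k + 1) → 𝒜, ‖a (concat w x)‖ * JBirk J (k + 1) w x ^ s :=
      fun k => Finset.sum_nonneg fun w _ =>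
        mul_nonneg (norm_nonneg _) (Real.rpow_nonneg (hJBpos _ _ _).le _)
    set S := ⨆ z : Omega 𝒜, ‖a z‖ with hS
    obtain ⟨M, hM⟩ := hMa
    have hbdd' : BddAbove (Set.range fun z : Omega 𝒜 => ‖a z‖) :=
      ⟨M, by rintro r ⟨z, rfl⟩; exact hM z⟩
    have hS0 : 0 ≤ S := le_trans (norm_nonneg _) (le_ciSup hbdd' y0)
    set r := m ^ (s - 1) with hr
    have hr0 : 0 ≤ r := Real.rpow_nonneg hmpos.le _
    have hr1 : r < 1 := Real.rpow_lt_one hmpos.le hm1 (by linarith)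
    have hgeo : Summable fun k : ℕ => S * r * r ^ k :=
      (summable_geometric_of_lt_one hr0 hr1).mul_left (S * r)
    refine Summable.of_nonneg_of_le hterm (fun k => ?_) hgeo
    have h1 := part2 a ha ⟨M, hM⟩ s hs k x
    refine h1.trans ?_
    have h2 : m ^ ((s - 1) * ((k : ℝ) + 1)) = r ^ (k + 1) := by
      rw [hr, ← Real.rpow_natCast (m ^ (s - 1)) (k + 1), ← Real.rpow_mul hmpos.le]
      congr 1
      push_cast
      ring
    rw [h2, pow_succ]
    exact le_of_eq (by ring)
  · -- divergence
    rintro α hα hHol a hac ha0 ⟨z0, hz0⟩ x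
    have haz0 : 0 < a z0 := lt_of_le_of_ne (ha0 z0) (Ne.symm hz0)
    set c := a z0 / 2 with hc
    have hopen : IsOpen (a ⁻¹' Set.Ioi c) := (isOpen_Ioi).preimage hac
    have hz0mem : z0 ∈ a ⁻¹' Set.Ioi c := by
      simp only [Set.mem_preimage, Set.mem_Ioi, hc]
      linarith
    obtain ⟨I, u, hu, hsub⟩ := isOpen_pi_iff.mp hopen z0 hz0mem
    set n : ℕ := I.sup id + 1 with hn
    have hcyl : ∀ y : Omega 𝒜, (∀ i, i < n → y i = z0 i) → c < a y := by
      intro y hy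
      have hmem : y ∈ (I : Set ℕ).pi u := by
        intro i hi
        have hi' : i ∈ I := hi
        have : y i = z0 i := hy i (Nat.lt_succ_of_le (Finset.le_sup (f := id) hi'))
        rw [this]
        exact (hu i hi').2
      exact hsub hmem
    obtain ⟨p, -, hp⟩ := isCompact_univ.exists_isMinOn ⟨y0, trivial⟩ hJc.continuousOn
    set jm := J p with hjm
    have hjmpos : 0 < jm := hJpos p
    have hjmle : ∀ y, jm ≤ J y := fun y => isMinOn_iff.mp hp y trivial
    set c' := c * jm ^ n with hc'
    have hc'pos : 0 < c' := mul_pos (half_pos haz0) (pow_pos hjmpos n)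
    have hLn : ∀ y : Omega 𝒜, c' ≤ (ruelle (fun z => Real.log (J z)))^[n] a y := by
      intro y
      rw [ruelle_iter hJpos]
      set w0 : Fin n → 𝒜 := fun i => z0 i with hw0
      have hmemw : ∀ i, i < n → concat w0 y i = z0 i := by
        intro i hi
        simp [concat, hi, hw0]
      have ha1 : c ≤ a (concat w0 y) := (hcyl _ hmemw).le
      have hJ1 : jm ^ n ≤ JBirk J n w0 y := by
        have h1 : (n : ℝ) * Real.log jm ≤ birkhoff (fun z => Real.log (J z)) n (concat w0 y) := by
          unfold birkhoff
          calc (n : ℝ) * Real.log jm = ∑ j ∈ Finset.range n, Real.log jm := by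
                rw [Finset.sum_const, Finset.card_range, nsmul_eq_mul]
            _ ≤ _ := Finset.sum_le_sum fun j _ => Real.log_le_log hjmpos (hjmle _)
        calc jm ^ n = Real.exp ((n : ℝ) * Real.log jm) := by
              rw [← Real.log_pow, Real.exp_log (pow_pos hjmpos n)]
          _ ≤ _ := Real.exp_le_exp.mpr h1
      have h2 : c' ≤ a (concat w0 y) * JBirk J n w0 y :=
        mul_le_mul ha1 hJ1 (pow_nonneg hjmpos.le n) (ha0 _)
      exact h2.trans (Finset.single_le_sum
        (f := fun w : Fin n → 𝒜 => a (concat w y) * JBirk J n w y)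
        (fun w _ => mul_nonneg (ha0 _) (hJBpos _ _ _).le) (Finset.mem_univ w0))
    intro hSum
    have htends := hSum.tendsto_atTop_zero
    have hev : ∀ᶠ k : ℕ in atTop, (ruelle (fun z => Real.log (J z)))^[k + 1] a x < c' :=
      htends.eventually_lt_const hc'pos
    obtain ⟨k, hklt, hkn⟩ := (hev.and (eventually_ge_atTop n)).exists
    have hbig : c' ≤ (ruelle (fun z => Real.log (J z)))^[k + 1] a x := by
      have he : k + 1 = (k + 1 - n) + n := by omega
      rw [he, Function.iterate_add_apply, ruelle_iter hJpos]
      calc c' = c' * ∑ w : Fin (k + 1 - n) → 𝒜, JBirk J (k + 1 - n) w x := by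
            rw [sum_JBirk hJpos hJsum, mul_one]
        _ = ∑ w : Fin (k + 1 - n) → 𝒜, c' * JBirk J (k + 1 - n) w x := by rw [Finset.mul_sum]
        _ ≤ ∑ w : Fin (k + 1 - n) → 𝒜,
              ((ruelle (fun z => Real.log (J z)))^[n] a) (concat w x)
                * JBirk J (k + 1 - n) w x :=
            Finset.sum_le_sum fun w _ =>
              mul_le_mul_of_nonneg_right (hLn _) (hJBpos _ _ _).le
    linarith

end GS
end

section
/- Let γ>2, let g be the Hofbauer potential on Ω={0,1}^ℕ, fix z∈C₀, and let f(s)=ζ(γs) ζ(γ)^{−s}. Then for every s>1 the series Σ_{n≥1} (L_{sg}^n 𝟏)(z) converges and equals (ζ(γ)^{−s} ζ(γs) + ζ(γs) − 1)/(1 − ζ(γs) ζ(γ)^{−s}); moreover lim_{s→1⁺} (s−1) Σ_{n≥1} (L_{sg}^n 𝟏)(z) = ζ(γ)/(−f′(1)), i.e. it equals 1/c with c := −f′(1)/ζ(γ) — the same constant as for the observable 1_{[1]}. -/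
open Real MeasureTheory Filter Topology Set

open scoped Classical

namespace GS

/-- The Riemann zeta function `ζ(γ) = ∑_{n≥1} n^{-γ}` (for real `γ > 1`). -/
noncomputable def zetaR (γ : ℝ) : ℝ := ∑' n : ℕ, ((n : ℝ) + 1) ^ (-γ)

/-- The Hofbauer potential on `Ω = {0,1}^ℕ`:
`g = −log ζ(γ)` on `C₀ = [0]`, `g = −γ log((k+1)/k)` on `C_k = [1⋯10]` (`k ≥ 1`), and
`g((1,1,1,…)) = 0`. -/
noncomputable def hof (γ : ℝ) (x : Omega (Fin 2)) : ℝ :=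
  if h : ∀ n, x n = 1 then 0
  else
    let k := Nat.find (not_forall.mp h)
    if k = 0 then -Real.log (zetaR γ) else -γ * Real.log (((k : ℝ) + 1) / (k : ℝ))

/-- The indicator function of the cylinder `[1] = {x : x₁ = 1}`. -/
noncomputable def indOne (x : Omega (Fin 2)) : ℝ := if x 0 = 1 then 1 else 0

/-- `L_s^n = (L_{s g}^n 1_{[1]})(z)` for the Hofbauer potential `g`. -/
noncomputable def LsHof (γ s : ℝ) (z : Omega (Fin 2)) (n : ℕ) : ℝ :=
  (ruelle (fun x => s * hof γ x))^[n] indOne z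

/-- `(L_{s g}^n 𝟏)(z)` for the Hofbauer potential `g`. -/
noncomputable def MsHof (γ s : ℝ) (z : Omega (Fin 2)) (n : ℕ) : ℝ :=
  (ruelle (fun x => s * hof γ x))^[n] (fun _ => (1 : ℝ)) z

/-- `f'(1)` for `f(s) = ζ(γs) ζ(γ)^{−s}`:
`f′(1) = (γ ζ′(γ) − ζ(γ) log ζ(γ))/ζ(γ)`. -/
noncomputable def fprime (γ : ℝ) : ℝ :=
  (γ * deriv zetaR γ - zetaR γ * Real.log (zetaR γ)) / zetaR γ

end GS

namespace GS

/-! ### Auxiliary development for `statement12` -/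

noncomputable def Vx (β α : ℝ) : ℕ → ℕ → ℝ
  | 0, _ => 1
  | (n+1), k => β * Vx β α n 0
      + Real.exp (-(α * Real.log (((k:ℝ)+2)/((k:ℝ)+1)))) * Vx β α n (k+1)

noncomputable def Wx (β α : ℝ) (n k : ℕ) : ℝ := ((k:ℝ)+1)^(-α) * Vx β α n k

def Run (x : Omega (Fin 2)) (k : ℕ) : Prop := (∀ i, i < k → x i = 1) ∧ x k = 0

lemma run_not_all (x : Omega (Fin 2)) (k : ℕ) (h : Run x k) : ¬ ∀ n, x n = 1 := by
  intro hall
  have := hall k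
  rw [h.2] at this
  exact absurd this (by decide)

lemma run_find (x : Omega (Fin 2)) (k : ℕ) (h : Run x k) :
    Nat.find (not_forall.mp (run_not_all x k h)) = k := by
  rw [Nat.find_eq_iff]
  constructor
  · rw [h.2]; decide
  · intro m hm
    simp only [not_not]
    exact h.1 m hm

lemma hof_run {x : Omega (Fin 2)} {k : ℕ} (h : Run x k) (γ : ℝ) :
    hof γ x = if k = 0 then -Real.log (zetaR γ)
      else -γ * Real.log (((k : ℝ) + 1) / (k : ℝ)) := by
  have hne := run_not_all x k h
  rw [hof, dif_neg hne]
  simp only [run_find x k h]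

lemma run_cons_zero (x : Omega (Fin 2)) : Run (cons 0 x) 0 :=
  ⟨fun i hi => absurd hi (Nat.not_lt_zero i), rfl⟩

lemma run_cons_one {x : Omega (Fin 2)} {k : ℕ} (h : Run x k) : Run (cons 1 x) (k+1) := by
  constructor
  · intro i hi
    cases i with
    | zero => rfl
    | succ j => exact h.1 j (Nat.lt_of_succ_lt_succ hi)
  · exact h.2

lemma iter_eq (γ s : ℝ) : ∀ (n : ℕ) (x : Omega (Fin 2)) (k : ℕ), Run x k →
    (ruelle (fun y => s * hof γ y))^[n] (fun _ => (1:ℝ)) x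
      = Vx (Real.exp (s * -Real.log (zetaR γ))) (s * γ) n k := by
  intro n
  induction n with
  | zero => intro x k _; simp [Vx]
  | succ n ih =>
    intro x k hx
    rw [Function.iterate_succ_apply']
    have h0 := run_cons_zero x
    have h1 := run_cons_one hx
    simp only [ruelle, Fin.sum_univ_two, smul_eq_mul]
    rw [ih _ _ h0, ih _ _ h1, hof_run h0 γ, hof_run h1 γ]
    simp only [Vx, if_pos rfl, Nat.succ_ne_zero, if_neg]
    push_cast
    ring_nf

lemma Vx_nonneg (β α : ℝ) (hβ : 0 ≤ β) : ∀ n k, 0 ≤ Vx β α n k := by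
  intro n
  induction n with
  | zero => intro k; simp [Vx]
  | succ n ih =>
    intro k
    simp only [Vx]
    exact add_nonneg (mul_nonneg hβ (ih 0)) (mul_nonneg (Real.exp_nonneg _) (ih (k+1)))

lemma Wrec (β α : ℝ) (n k : ℕ) :
    Wx β α (n+1) k = ((k:ℝ)+1)^(-α) * β * Vx β α n 0 + Wx β α n (k+1) := by
  have hk1 : (0:ℝ) < (k:ℝ)+1 := by positivity
  have hr : (0:ℝ) < ((k:ℝ)+2)/((k:ℝ)+1) := by positivity
  have key : ((k:ℝ)+1)^(-α) * Real.exp (-(α * Real.log (((k:ℝ)+2)/((k:ℝ)+1))))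
      = ((k:ℝ)+2)^(-α) := by
    rw [show -(α * Real.log (((k:ℝ)+2)/((k:ℝ)+1)))
        = Real.log (((k:ℝ)+2)/((k:ℝ)+1)) * (-α) by ring,
      ← Real.rpow_def_of_pos hr, ← Real.mul_rpow (le_of_lt hk1) (le_of_lt hr)]
    congr 1
    field_simp
  simp only [Wx, Vx]
  rw [mul_add]
  congr 1
  · ring
  · rw [show ((k:ℝ)+1)^(-α) * (Real.exp (-(α * Real.log (((k:ℝ)+2)/((k:ℝ)+1)))) * Vx β α n (k+1))
        = (((k:ℝ)+1)^(-α) * Real.exp (-(α * Real.log (((k:ℝ)+2)/((k:ℝ)+1))))) * Vx β α n (k+1)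
        by ring, key]
    congr 2
    push_cast
    ring

lemma Wexp (β α : ℝ) : ∀ n k, Wx β α n k
    = β * ∑ m ∈ Finset.range n, ((k:ℝ)+(m:ℝ)+1)^(-α) * Vx β α (n-1-m) 0
      + ((k:ℝ)+(n:ℝ)+1)^(-α) := by
  intro n
  induction n with
  | zero => intro k; simp [Wx, Vx]
  | succ n ih =>
    intro k
    rw [Wrec, ih (k+1), Finset.sum_range_succ']
    push_cast
    have h1 : ∀ m ∈ Finset.range n,
        ((k:ℝ) + ((m:ℝ)+1) + 1)^(-α) * Vx β α (n - (m+1)) 0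
        = (2+(k:ℝ)+(m:ℝ))^(-α) * Vx β α (n-1-m) 0 := by
      intro m _
      have : n-(m+1) = n-1-m := by omega
      rw [this]
      ring_nf
    have h1' : ∀ m ∈ Finset.range n,
        ((k:ℝ)+1+(m:ℝ)+1)^(-α) * Vx β α (n-1-m) 0
        = (2+(k:ℝ)+(m:ℝ))^(-α) * Vx β α (n-1-m) 0 := by
      intro m _
      ring_nf
    rw [Finset.sum_congr rfl h1, Finset.sum_congr rfl h1']
    simp only [Nat.cast_zero, Nat.sub_zero, add_zero]
    ring_nf

lemma u_rec (β α : ℝ) (n : ℕ) :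
    Vx β α n 0 = β * ∑ m ∈ Finset.range n, ((m:ℝ)+1)^(-α) * Vx β α (n-1-m) 0
      + ((n:ℝ)+1)^(-α) := by
  have := Wexp β α n 0
  simp only [Wx, Nat.cast_zero, zero_add, Real.one_rpow, one_mul] at this
  exact this

lemma summable_a {α : ℝ} (hα : 1 < α) : Summable (fun n : ℕ => ((n:ℝ)+1) ^ (-α)) := by
  have := (Real.summable_one_div_nat_rpow (p := α)).2 hα
  have h2 := (summable_nat_add_iff 1).2 this
  refine h2.congr fun n => ?_
  push_cast
  rw [one_div, ← Real.rpow_neg (by positivity)]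

lemma renewal (β α : ℝ) (hβ : 0 ≤ β) (hα : 1 < α)
    (hβA : β * (∑' m : ℕ, ((m:ℝ)+1)^(-α)) < 1) :
    Summable (fun n => Vx β α n 0) ∧
    ∑' n, Vx β α n 0
      = (∑' m : ℕ, ((m:ℝ)+1)^(-α)) / (1 - β * ∑' m : ℕ, ((m:ℝ)+1)^(-α)) := by
  set a : ℕ → ℝ := fun m => ((m:ℝ)+1)^(-α) with ha_def
  set u : ℕ → ℝ := fun n => Vx β α n 0 with hu_def
  have ha : Summable a := summable_a hα
  have ha0 : ∀ m, 0 ≤ a m := fun m => by positivity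
  have hu0 : ∀ n, 0 ≤ u n := fun n => Vx_nonneg β α hβ n 0
  set A : ℝ := ∑' m, a m with hA_def
  have hApos : 0 < A := by
    have h1 : (1:ℝ) ≤ A := by
      have : a 0 = 1 := by simp [ha_def]
      calc (1:ℝ) = a 0 := this.symm
        _ ≤ A := Summable.le_tsum ha 0 (fun i _ => ha0 i)
    linarith
  have hden : 0 < 1 - β * A := by linarith
  have hbound : ∀ N, ∑ n ∈ Finset.range N, u n ≤ A / (1 - β * A) := by
    intro N
    set S := ∑ n ∈ Finset.range N, u n with hS_def
    have hSnn : 0 ≤ S := Finset.sum_nonneg fun i _ => hu0 i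
    have hstep : S ≤ β * (A * S) + A := by
      have hrw : S = β * (∑ n ∈ Finset.range N, ∑ m ∈ Finset.range n, a m * u (n-1-m))
          + ∑ n ∈ Finset.range N, a n := by
        rw [hS_def]
        rw [Finset.mul_sum, ← Finset.sum_add_distrib]
        exact Finset.sum_congr rfl fun n _ => u_rec β α n
      have hD : ∑ n ∈ Finset.range N, ∑ m ∈ Finset.range n, a m * u (n-1-m) ≤ A * S := by
        have hcomm : ∑ n ∈ Finset.range N, ∑ m ∈ Finset.range n, a m * u (n-1-m)
            = ∑ m ∈ Finset.range N, ∑ n ∈ Finset.Ico (m+1) N, a m * u (n-1-m) := by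
          simp only [Finset.range_eq_Ico]; rw [← Finset.sum_Ico_Ico_comm' 0 N (fun m n => a m * u (n-1-m))]
        rw [hcomm]
        have hinner : ∀ m ∈ Finset.range N, ∑ n ∈ Finset.Ico (m+1) N, a m * u (n-1-m)
            ≤ a m * S := by
          intro m _
          rw [← Finset.mul_sum]
          refine mul_le_mul_of_nonneg_left ?_ (ha0 m)
          rw [Finset.sum_Ico_eq_sum_range]
          have : ∀ j ∈ Finset.range (N - (m+1)), u (m+1+j-1-m) = u j := by
            intro j _
            congr 1
            omega
          rw [Finset.sum_congr rfl this]
          refine Finset.sum_le_sum_of_subset_of_nonneg ?_ (fun i _ _ => hu0 i)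
          exact Finset.range_subset_range.2 (by omega)
        calc ∑ m ∈ Finset.range N, ∑ n ∈ Finset.Ico (m+1) N, a m * u (n-1-m)
            ≤ ∑ m ∈ Finset.range N, a m * S := Finset.sum_le_sum hinner
          _ = (∑ m ∈ Finset.range N, a m) * S := by rw [Finset.sum_mul]
          _ ≤ A * S := by
              refine mul_le_mul_of_nonneg_right ?_ hSnn
              exact Summable.sum_le_tsum _ (fun i _ => ha0 i) ha
      have haN : ∑ n ∈ Finset.range N, a n ≤ A := Summable.sum_le_tsum _ (fun i _ => ha0 i) ha
      calc S = β * (∑ n ∈ Finset.range N, ∑ m ∈ Finset.range n, a m * u (n-1-m))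
            + ∑ n ∈ Finset.range N, a n := hrw
        _ ≤ β * (A * S) + A := add_le_add (mul_le_mul_of_nonneg_left hD hβ) haN
    rw [le_div_iff₀ hden]
    nlinarith [hstep]
  have hsumm : Summable u := by
    refine summable_of_sum_range_le hu0 hbound
  refine ⟨hsumm, ?_⟩
  set T : ℝ := ∑' n, u n with hT_def
  have hnorm_a : Summable fun n => ‖a n‖ := by
    refine ha.congr fun n => ?_
    rw [Real.norm_eq_abs, abs_of_nonneg (ha0 n)]
  have hnorm_u : Summable fun n => ‖u n‖ := by
    refine hsumm.congr fun n => ?_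
    rw [Real.norm_eq_abs, abs_of_nonneg (hu0 n)]
  have hc : Summable fun n => ∑ k ∈ Finset.range (n+1), a k * u (n-k) :=
    (summable_norm_sum_mul_range_of_summable_norm hnorm_a hnorm_u).of_norm
  have hcauchy : A * T = ∑' n, ∑ k ∈ Finset.range (n+1), a k * u (n-k) :=
    tsum_mul_tsum_eq_tsum_sum_range_of_summable_norm hnorm_a hnorm_u
  have hshift : ∀ n : ℕ, u (n+1) = β * (∑ k ∈ Finset.range (n+1), a k * u (n-k)) + a (n+1) := by
    intro n
    have h := u_rec β α (n+1)
    have hcg : ∀ m ∈ Finset.range (n+1), ((m:ℝ)+1)^(-α) * Vx β α (n+1-1-m) 0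
        = a m * u (n-m) := by
      intro m _
      have hmm : n+1-1-m = n-m := by omega
      rw [hmm]
    rw [Finset.sum_congr rfl hcg] at h
    exact h
  have hT1 : T = u 0 + ∑' n, u (n+1) := Summable.tsum_eq_zero_add hsumm
  have hA1 : A = a 0 + ∑' n, a (n+1) := Summable.tsum_eq_zero_add ha
  have h2 : ∑' n, u (n+1) = β * (A * T) + (A - a 0) := by
    calc ∑' n, u (n+1)
        = ∑' n, (β * (∑ k ∈ Finset.range (n+1), a k * u (n-k)) + a (n+1)) :=
          tsum_congr hshift
      _ = β * (∑' n, ∑ k ∈ Finset.range (n+1), a k * u (n-k)) + ∑' n, a (n+1) := by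
          rw [Summable.tsum_add (hc.mul_left β) ((summable_nat_add_iff 1).2 ha), tsum_mul_left]
      _ = β * (A * T) + (A - a 0) := by
          rw [← hcauchy]
          have hh : A - a 0 = ∑' n, a (n+1) := by rw [hA1]; ring
          rw [hh]
  have hu00 : u 0 = 1 := by simp [hu_def, Vx]
  have ha00 : a 0 = 1 := by simp [ha_def]
  have hTeq : T = β * A * T + A := by
    have h3 := hT1
    rw [h2, hu00, ha00] at h3
    linear_combination h3
  rw [eq_div_iff (ne_of_gt hden)]
  linear_combination hTeq

lemma rpow_neg_hasDerivAt {b : ℝ} (hb : 0 < b) (x : ℝ) :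
    HasDerivAt (fun y : ℝ => b ^ (-y)) (-Real.log b * b ^ (-x)) x := by
  have heq : (fun y : ℝ => b ^ (-y)) = fun y : ℝ => Real.exp (Real.log b * (-y)) := by
    funext y
    rw [Real.rpow_def_of_pos hb]
  rw [heq]
  have hlin : HasDerivAt (fun y : ℝ => Real.log b * (-y)) (-Real.log b) x := by
    simpa using ((hasDerivAt_id x).neg.const_mul (Real.log b))
  have := hlin.exp
  convert this using 1
  rw [← Real.rpow_def_of_pos hb]
  ring

lemma zetaR_hasDerivAt {x : ℝ} (hx : 2 < x) :
    HasDerivAt zetaR (∑' n : ℕ, -Real.log ((n:ℝ)+1) * ((n:ℝ)+1) ^ (-x)) x := by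
  have hb : Summable (fun n : ℕ => 2 * ((n:ℝ)+1) ^ (-(3/2 : ℝ))) :=
    (summable_a (by norm_num)).mul_left 2
  have key : ∀ y ∈ Ioi (2:ℝ), HasDerivAt (fun z => ∑' n : ℕ, ((n:ℝ)+1) ^ (-z))
      (∑' n : ℕ, -Real.log ((n:ℝ)+1) * ((n:ℝ)+1) ^ (-y)) y := by
    intro y hy
    refine hasDerivAt_tsum_of_isPreconnected hb isOpen_Ioi
      (isPreconnected_Ioi)
      (fun n z _ => rpow_neg_hasDerivAt (by positivity : (0:ℝ) < (n:ℝ)+1) z)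
      ?_ (by norm_num : (3:ℝ) ∈ Ioi (2:ℝ))
      (summable_a (by norm_num : (1:ℝ) < 3)) hy
    intro n z hz
    have hb0 : (0:ℝ) < (n:ℝ)+1 := by positivity
    have hb1 : (1:ℝ) ≤ (n:ℝ)+1 := by norm_num
    have hlog : 0 ≤ Real.log ((n:ℝ)+1) := Real.log_nonneg hb1
    have hnorm : ‖-Real.log ((n:ℝ)+1) * ((n:ℝ)+1) ^ (-z)‖
        = Real.log ((n:ℝ)+1) * ((n:ℝ)+1) ^ (-z) := by
      rw [norm_mul, norm_neg, Real.norm_eq_abs, Real.norm_eq_abs,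
        abs_of_nonneg hlog, abs_of_nonneg (Real.rpow_nonneg hb0.le _)]
    rw [hnorm]
    have h1 : Real.log ((n:ℝ)+1) ≤ 2 * ((n:ℝ)+1) ^ ((1:ℝ)/2) := by
      have h := Real.log_le_rpow_div hb0.le (by norm_num : (0:ℝ) < 1/2)
      calc Real.log ((n:ℝ)+1) ≤ ((n:ℝ)+1) ^ ((1:ℝ)/2) / (1/2) := h
        _ = 2 * ((n:ℝ)+1) ^ ((1:ℝ)/2) := by ring
    have h2 : ((n:ℝ)+1) ^ (-z) ≤ ((n:ℝ)+1) ^ (-2:ℝ) :=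
      Real.rpow_le_rpow_of_exponent_le hb1 (by have := hz.out; linarith)
    calc Real.log ((n:ℝ)+1) * ((n:ℝ)+1) ^ (-z)
        ≤ (2 * ((n:ℝ)+1) ^ ((1:ℝ)/2)) * ((n:ℝ)+1) ^ (-2:ℝ) :=
          mul_le_mul h1 h2 (Real.rpow_nonneg hb0.le _) (by positivity)
      _ = 2 * ((n:ℝ)+1) ^ (-(3/2:ℝ)) := by
          rw [mul_assoc, ← Real.rpow_add hb0]
          norm_num
  exact key x hx

end GS

namespace GS

/-- the Hofbauer model with observable `𝟏`.
For `γ > 2` and `z ∈ C₀`: for every `s > 1` the series `∑_{n≥1} (L_{sg}^n 𝟏)(z)` converges and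
equals `(ζ(γ)^{−s} ζ(γs) + ζ(γs) − 1)/(1 − ζ(γs) ζ(γ)^{−s})`; moreover
`lim_{s→1⁺} (s−1) ∑_{n≥1} (L_{sg}^n 𝟏)(z) = ζ(γ)/(−f′(1)) = 1/c` with `c := −f′(1)/ζ(γ)` —
the same constant as for the observable `1_{[1]}`. -/
theorem statement12 (γ : ℝ) (hγ : 2 < γ) (z : Omega (Fin 2)) (hz : z 0 = 0) :
    (∀ s : ℝ, 1 < s →
      Summable (fun n : ℕ => MsHof γ s z (n + 1)) ∧
        ∑' n : ℕ, MsHof γ s z (n + 1)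
          = (zetaR γ ^ (-s) * zetaR (γ * s) + zetaR (γ * s) - 1)
              / (1 - zetaR (γ * s) * zetaR γ ^ (-s))) ∧
    Tendsto (fun s : ℝ => (s - 1) * ∑' n : ℕ, MsHof γ s z (n + 1)) (𝓝[>] (1 : ℝ))
      (𝓝 (zetaR γ / (-fprime γ))) ∧
    zetaR γ / (-fprime γ) = 1 / (-fprime γ / zetaR γ) := by
  have hγ0 : (0:ℝ) < γ := by linarith
  have hζsum : Summable (fun n : ℕ => ((n:ℝ)+1) ^ (-γ)) := summable_a (by linarith)
  have hζ_eq : zetaR γ = ∑' n : ℕ, ((n:ℝ)+1) ^ (-γ) := rfl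
  have hζ1 : 1 < zetaR γ := by
    have hsum2 : (∑ n ∈ Finset.range 2, ((n:ℝ)+1) ^ (-γ)) ≤ zetaR γ :=
      Summable.sum_le_tsum _ (fun i _ => by positivity) hζsum
    have hval : (∑ n ∈ Finset.range 2, ((n:ℝ)+1) ^ (-γ)) = 1 + 2 ^ (-γ) := by
      rw [Finset.sum_range_succ, Finset.sum_range_one]
      norm_num
    rw [hval] at hsum2
    have h2 : (0:ℝ) < (2:ℝ) ^ (-γ) := by positivity
    linarith
  have hζ0 : 0 < zetaR γ := by linarith
  have hrunz : Run z 0 := ⟨fun i hi => absurd hi (Nat.not_lt_zero i), hz⟩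
  have hMs : ∀ (s : ℝ) (n : ℕ), MsHof γ s z n
      = Vx (Real.exp (s * -Real.log (zetaR γ))) (s*γ) n 0 := by
    intro s n
    exact iter_eq γ s n z 0 hrunz
  have hβ_eq : ∀ s : ℝ, Real.exp (s * -Real.log (zetaR γ)) = zetaR γ ^ (-s) := by
    intro s
    rw [Real.rpow_def_of_pos hζ0]
    congr 1
    ring
  have hA_eq : ∀ s : ℝ, (∑' m : ℕ, ((m:ℝ)+1)^(-(s*γ))) = zetaR (γ*s) := by
    intro s
    exact tsum_congr fun m => by rw [mul_comm s γ]
  have main : ∀ s : ℝ, 1 < s →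
      (0 < 1 - zetaR (γ * s) * zetaR γ ^ (-s)) ∧
      Summable (fun n : ℕ => MsHof γ s z (n + 1)) ∧
        ∑' n : ℕ, MsHof γ s z (n + 1)
          = (zetaR γ ^ (-s) * zetaR (γ * s) + zetaR (γ * s) - 1)
              / (1 - zetaR (γ * s) * zetaR γ ^ (-s)) := by
    intro s hs
    have hαs : 1 < s*γ := by nlinarith
    have hAsum : Summable (fun m : ℕ => ((m:ℝ)+1)^(-(s*γ))) := summable_a hαs
    have hAle : (∑' m : ℕ, ((m:ℝ)+1)^(-(s*γ))) ≤ zetaR γ := by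
      rw [hζ_eq]
      refine Summable.tsum_le_tsum (fun m => ?_) hAsum hζsum
      refine Real.rpow_le_rpow_of_exponent_le (by norm_num) ?_
      nlinarith
    have hβlt : zetaR γ ^ (-s) < (zetaR γ)⁻¹ := by
      calc zetaR γ ^ (-s) < zetaR γ ^ (-1:ℝ) :=
            Real.rpow_lt_rpow_of_exponent_lt hζ1 (by linarith)
        _ = (zetaR γ)⁻¹ := Real.rpow_neg_one _
    have hβnn : (0:ℝ) ≤ Real.exp (s * -Real.log (zetaR γ)) := Real.exp_nonneg _
    have hβA : Real.exp (s * -Real.log (zetaR γ)) * (∑' m : ℕ, ((m:ℝ)+1)^(-(s*γ))) < 1 := by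
      rw [hβ_eq s]
      calc zetaR γ ^ (-s) * (∑' m : ℕ, ((m:ℝ)+1)^(-(s*γ)))
          ≤ zetaR γ ^ (-s) * zetaR γ := by
            refine mul_le_mul_of_nonneg_left hAle ?_
            exact Real.rpow_nonneg hζ0.le _
        _ < (zetaR γ)⁻¹ * zetaR γ := mul_lt_mul_of_pos_right hβlt hζ0
        _ = 1 := inv_mul_cancel₀ (ne_of_gt hζ0)
    obtain ⟨hsumm, htsum⟩ := renewal _ (s*γ) hβnn hαs hβA
    have hden : 0 < 1 - zetaR (γ * s) * zetaR γ ^ (-s) := by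
      have := hβA
      rw [hβ_eq s, hA_eq s] at this
      linarith [this]
    refine ⟨hden, ?_, ?_⟩
    · have := (summable_nat_add_iff 1).2 hsumm
      refine this.congr fun n => ?_
      rw [hMs s (n+1)]
    · have hshift2 : (∑' n : ℕ, MsHof γ s z (n+1))
          = (∑' n, Vx (Real.exp (s * -Real.log (zetaR γ))) (s*γ) n 0) - 1 := by
        have h0 := Summable.tsum_eq_zero_add hsumm
        have hV0 : Vx (Real.exp (s * -Real.log (zetaR γ))) (s*γ) 0 0 = 1 := rfl
        have hcg : (∑' n : ℕ, MsHof γ s z (n+1))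
            = ∑' n, Vx (Real.exp (s * -Real.log (zetaR γ))) (s*γ) (n+1) 0 :=
          tsum_congr fun n => by rw [hMs s (n+1)]
        rw [hcg]
        rw [h0, hV0]
        ring
      rw [hshift2, htsum, hβ_eq s, hA_eq s]
      rw [div_sub' (by rw [mul_comm (zetaR γ ^ (-s))]; exact ne_of_gt hden)]
      rw [div_eq_div_iff (by rw [mul_comm (zetaR γ ^ (-s))]; exact ne_of_gt hden)
        (ne_of_gt hden)]
      ring
  refine ⟨fun s hs => ⟨(main s hs).2.1, (main s hs).2.2⟩, ?_, ?_⟩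
  · -- the limit
    have hDer : HasDerivAt zetaR (deriv zetaR γ) γ :=
      (zetaR_hasDerivAt hγ).differentiableAt.hasDerivAt
    have hDnp : deriv zetaR γ ≤ 0 := by
      rw [(zetaR_hasDerivAt hγ).deriv]
      refine tsum_nonpos fun n => ?_
      have h1 : 0 ≤ Real.log ((n:ℝ)+1) := Real.log_nonneg (by norm_num)
      have h2 : (0:ℝ) ≤ ((n:ℝ)+1) ^ (-γ) := Real.rpow_nonneg (by positivity) _
      have := mul_nonneg h1 h2
      nlinarith
    have hlogpos : 0 < Real.log (zetaR γ) := Real.log_pos hζ1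
    have hfp_neg : fprime γ < 0 := by
      rw [fprime]
      apply div_neg_of_neg_of_pos _ hζ0
      have hh1 : γ * deriv zetaR γ ≤ 0 := mul_nonpos_iff.2 (Or.inl ⟨hγ0.le, hDnp⟩)
      have hh2 : 0 < zetaR γ * Real.log (zetaR γ) := mul_pos hζ0 hlogpos
      linarith
    -- derivative of f(s) = ζ(γ s) ζ(γ)^(−s) at s = 1
    have hinner : HasDerivAt (fun s : ℝ => γ * s) γ 1 := by
      simpa using (hasDerivAt_id (1:ℝ)).const_mul γ
    have houter : HasDerivAt zetaR (deriv zetaR γ) (γ * 1) := by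
      rw [mul_one]; exact hDer
    have h1 : HasDerivAt (fun s : ℝ => zetaR (γ * s)) (deriv zetaR γ * γ) 1 :=
      HasDerivAt.comp 1 houter hinner
    have h2 : HasDerivAt (fun s : ℝ => zetaR γ ^ (-s))
        (-Real.log (zetaR γ) * zetaR γ ^ (-(1:ℝ))) 1 := rpow_neg_hasDerivAt hζ0 1
    have hprod := h1.mul h2
    have hf1 : zetaR (γ * 1) * zetaR γ ^ (-(1:ℝ)) = 1 := by
      rw [mul_one, Real.rpow_neg_one]
      exact mul_inv_cancel₀ (ne_of_gt hζ0)
    have hf'1 : deriv zetaR γ * γ * zetaR γ ^ (-(1:ℝ))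
        + zetaR (γ * 1) * (-Real.log (zetaR γ) * zetaR γ ^ (-(1:ℝ))) = fprime γ := by
      rw [fprime, mul_one, Real.rpow_neg_one]
      field_simp
      ring
    rw [hf'1] at hprod
    have hslope : Tendsto (slope (fun s : ℝ => zetaR (γ * s) * zetaR γ ^ (-s)) 1)
        (𝓝[>] (1:ℝ)) (𝓝 (fprime γ)) := by
      have := hasDerivAt_iff_tendsto_slope.1 hprod
      exact this.mono_left (nhdsWithin_mono 1 (fun x hx => ne_of_gt hx))
    have hInv : Tendsto (fun s : ℝ =>
        -(slope (fun s : ℝ => zetaR (γ * s) * zetaR γ ^ (-s)) 1 s)⁻¹)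
        (𝓝[>] (1:ℝ)) (𝓝 (-(fprime γ)⁻¹)) :=
      (hslope.inv₀ (ne_of_lt hfp_neg)).neg
    have hNcont : Tendsto (fun s : ℝ => zetaR (γ * s) * zetaR γ ^ (-s) + zetaR (γ * s) - 1)
        (𝓝[>] (1:ℝ)) (𝓝 (zetaR γ)) := by
      have hc : ContinuousAt (fun s : ℝ => zetaR (γ * s) * zetaR γ ^ (-s) + zetaR (γ * s) - 1)
          1 := ((hprod.continuousAt.add h1.continuousAt).sub continuousAt_const)
      have := hc.tendsto.mono_left (nhdsWithin_le_nhds (s := Ioi (1:ℝ)))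
      have hval : zetaR (γ * 1) * zetaR γ ^ (-(1:ℝ)) + zetaR (γ * 1) - 1 = zetaR γ := by
        rw [hf1, mul_one]
        ring
      rw [hval] at this
      exact this
    have hT : Tendsto (fun s : ℝ =>
        -(slope (fun s : ℝ => zetaR (γ * s) * zetaR γ ^ (-s)) 1 s)⁻¹
          * (zetaR (γ * s) * zetaR γ ^ (-s) + zetaR (γ * s) - 1))
        (𝓝[>] (1:ℝ)) (𝓝 (-(fprime γ)⁻¹ * zetaR γ)) := hInv.mul hNcont
    have hvaleq : -(fprime γ)⁻¹ * zetaR γ = zetaR γ / (-fprime γ) := by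
      rw [div_eq_mul_inv, inv_neg]
      ring
    rw [hvaleq] at hT
    refine hT.congr' ?_
    filter_upwards [self_mem_nhdsWithin] with s hs
    have hs1 : (1:ℝ) < s := hs
    rw [(main s hs1).2.2]
    have hden := (main s hs1).1
    have hslope_eq : slope (fun s : ℝ => zetaR (γ * s) * zetaR γ ^ (-s)) 1 s
        = (zetaR (γ * s) * zetaR γ ^ (-s) - 1) / (s - 1) := by
      rw [slope_def_field, hf1]
    rw [hslope_eq]
    rw [div_eq_mul_inv, div_eq_mul_inv]
    have hsne : s - 1 ≠ 0 := by linarith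
    have hfne : zetaR (γ * s) * zetaR γ ^ (-s) - 1 ≠ 0 := by
      intro h
      have : zetaR (γ * s) * zetaR γ ^ (-s) = 1 := by linarith
      rw [this] at hden
      norm_num at hden
    field_simp
    ring
  · rw [one_div_div]


end GS
end

section
/- Let J be a g-function and fix x,y∈Ω. Then A₀ := {a∈C(Ω,ℂ) : Σ_{w∈W*} |a(wx)−a(wy)|/𝕁(wx) < ∞} is a subalgebra of C(Ω,ℂ) that is closed under complex conjugation, contains all locally constant functions (functions depending on only finitely many coordinates), and is dense in C(Ω,ℂ) in the uniform norm. -/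
open Real MeasureTheory Filter Topology Set

open scoped Classical

namespace GS

/-- The set `A₀ = {a ∈ C(Ω,ℂ) : ∑_{w∈W*} |a(wx)−a(wy)|/𝕁(wx) < ∞}` of continuous functions
with bounded commutator `[D, L_a]`. -/
noncomputable def A0 {𝒜 : Type} [Fintype 𝒜] [TopologicalSpace 𝒜]
    (J : Omega 𝒜 → ℝ) (x y : Omega 𝒜) : Set C(Omega 𝒜, ℂ) :=
  {a | Summable (fun w : Words 𝒜 =>
    ‖a (concat w.2 x) - a (concat w.2 y)‖ / JBirk J (w.1 + 1) w.2 x)}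


section Aux

variable {𝒜 : Type}

lemma JBirk_pos' (J : Omega 𝒜 → ℝ) (k : ℕ) (w : Fin k → 𝒜) (z : Omega 𝒜) :
    0 < JBirk J k w z := Real.exp_pos _

/-- Cylinders form a neighborhood basis in the product space. -/
lemma cyl_subset_of_mem_nhds [TopologicalSpace 𝒜] {u : Omega 𝒜} {U : Set (Omega 𝒜)} (hU : U ∈ 𝓝 u) :
    ∃ n : ℕ, {v : Omega 𝒜 | ∀ i < n, v i = u i} ⊆ U := by
  rw [nhds_pi, Filter.mem_pi] at hU
  obtain ⟨I, hIfin, t, ht, hsub⟩ := hU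
  obtain ⟨N, hN⟩ := hIfin.bddAbove
  refine ⟨N + 1, fun v hv => hsub fun i hi => ?_⟩
  have hv' : v i = u i := hv i (Nat.lt_succ_of_le (hN hi))
  rw [hv']
  exact mem_of_mem_nhds (ht i)

/-- Uniform continuity on the compact product space: approximation on cylinders. -/
lemma uniform_approx [Fintype 𝒜] [TopologicalSpace 𝒜] [DiscreteTopology 𝒜]
    (a : Omega 𝒜 → ℂ) (ha : Continuous a) {ε : ℝ} (hε : 0 < ε) :
    ∃ n : ℕ, ∀ u v : Omega 𝒜, (∀ i < n, u i = v i) → ‖a u - a v‖ ≤ ε := by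
  have key : ∀ u : Omega 𝒜, ∃ n : ℕ, ∀ v, (∀ i < n, v i = u i) → ‖a v - a u‖ < ε / 2 := by
    intro u
    have hmem : {v : Omega 𝒜 | ‖a v - a u‖ < ε / 2} ∈ 𝓝 u := by
      have hc : Continuous fun v => ‖a v - a u‖ := (ha.sub continuous_const).norm
      refine (hc.isOpen_preimage (Set.Iio (ε / 2)) isOpen_Iio).mem_nhds ?_
      simp [half_pos hε]
    obtain ⟨n, hn⟩ := cyl_subset_of_mem_nhds hmem
    exact ⟨n, fun v hv => hn hv⟩
  choose n hn using key
  have hopen : ∀ u : Omega 𝒜, IsOpen {v : Omega 𝒜 | ∀ i < n u, v i = u i} := by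
    intro u
    have heq : {v : Omega 𝒜 | ∀ i < n u, v i = u i} =
        ⋂ i ∈ Finset.range (n u), (fun v : Omega 𝒜 => v i) ⁻¹' {u i} := by
      ext v; simp
    rw [heq]
    exact isOpen_biInter_finset fun i _ =>
      (continuous_apply i).isOpen_preimage _ (isOpen_discrete _)
  have hcover : (Set.univ : Set (Omega 𝒜)) ⊆
      ⋃ u : Omega 𝒜, {v : Omega 𝒜 | ∀ i < n u, v i = u i} :=
    fun u _ => Set.mem_iUnion.2 ⟨u, fun i _ => rfl⟩
  obtain ⟨t, ht⟩ := isCompact_univ.elim_finite_subcover _ hopen hcover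
  refine ⟨t.sup n, fun u v huv => ?_⟩
  obtain ⟨u₀, hu₀t, hu₀⟩ : ∃ u₀ ∈ t, ∀ i < n u₀, u i = u₀ i := by
    have := ht (Set.mem_univ u)
    simpa using this
  have hvu₀ : ∀ i < n u₀, v i = u₀ i := fun i hi =>
    ((huv i (lt_of_lt_of_le hi (Finset.le_sup hu₀t))).symm).trans (hu₀ i hi)
  have h1 : ‖a u - a u₀‖ < ε / 2 := hn u₀ u hu₀
  have h2 : ‖a v - a u₀‖ < ε / 2 := hn u₀ v hvu₀
  calc ‖a u - a v‖ ≤ ‖a u - a u₀‖ + ‖a u₀ - a v‖ := norm_sub_le_norm_sub_add_norm_sub _ _ _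
    _ ≤ ε / 2 + ε / 2 := by rw [norm_sub_rev (a u₀)]; linarith
    _ = ε := by ring

/-- Locally constant functions belong to `A0`. -/
lemma locConst_mem_A0 [Fintype 𝒜] [TopologicalSpace 𝒜] (J : Omega 𝒜 → ℝ) (x y : Omega 𝒜)
    (a : C(Omega 𝒜, ℂ)) (n : ℕ)
    (h : ∀ u v : Omega 𝒜, (∀ i < n, u i = v i) → a u = a v) : a ∈ A0 J x y := by
  refine summable_of_ne_finset_zero
    (s := (Finset.range n).sigma fun k => (Finset.univ : Finset (Fin (k + 1) → 𝒜))) ?_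
  intro w hw
  have hk : n ≤ w.1 := by
    by_contra hlt
    exact hw (Finset.mem_sigma.2 ⟨Finset.mem_range.2 (not_le.mp hlt), Finset.mem_univ _⟩)
  have heq : a (concat w.2 x) = a (concat w.2 y) := by
    apply h
    intro i hi
    have hik : i < w.1 + 1 := Nat.lt_succ_of_lt (lt_of_lt_of_le hi hk)
    simp only [concat, dif_pos hik]
  simp [heq]

/-- `A0` as a star subalgebra. -/
noncomputable def A0star [Fintype 𝒜] [TopologicalSpace 𝒜] (J : Omega 𝒜 → ℝ)
    (x y : Omega 𝒜) : StarSubalgebra ℂ C(Omega 𝒜, ℂ) where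
  carrier := A0 J x y
  algebraMap_mem' := by
    intro c
    show Summable _
    have : (fun w : Words 𝒜 =>
        ‖(algebraMap ℂ C(Omega 𝒜, ℂ) c) (concat w.2 x) -
          (algebraMap ℂ C(Omega 𝒜, ℂ) c) (concat w.2 y)‖ / JBirk J (w.1 + 1) w.2 x)
        = fun _ => 0 := by
      funext w
      simp
    rw [this]
    exact summable_zero
  add_mem' := by
    intro a b ha hb
    refine Summable.of_nonneg_of_le
      (fun w => div_nonneg (norm_nonneg _) (JBirk_pos' J _ _ _).le) (fun w => ?_)
      ((ha : Summable _).add (hb : Summable _))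
    simp only [ContinuousMap.add_apply]
    rw [← add_div]
    refine (div_le_div_iff_of_pos_right (JBirk_pos' J _ _ _)).2 ?_
    calc ‖a (concat w.2 x) + b (concat w.2 x) - (a (concat w.2 y) + b (concat w.2 y))‖
        = ‖(a (concat w.2 x) - a (concat w.2 y)) + (b (concat w.2 x) - b (concat w.2 y))‖ := by
          ring_nf
      _ ≤ _ := norm_add_le _ _
  mul_mem' := by
    intro a b ha hb
    refine Summable.of_nonneg_of_le
      (fun w => div_nonneg (norm_nonneg _) (JBirk_pos' J _ _ _).le) (fun w => ?_)
      (((hb : Summable _).mul_left ‖a‖).add ((ha : Summable _).mul_left ‖b‖))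
    simp only [ContinuousMap.mul_apply]
    rw [← mul_div_assoc, ← mul_div_assoc, ← add_div]
    refine (div_le_div_iff_of_pos_right (JBirk_pos' J _ _ _)).2 ?_
    have hdec : a (concat w.2 x) * b (concat w.2 x) - a (concat w.2 y) * b (concat w.2 y)
        = a (concat w.2 x) * (b (concat w.2 x) - b (concat w.2 y)) +
          (a (concat w.2 x) - a (concat w.2 y)) * b (concat w.2 y) := by ring
    rw [hdec]
    calc ‖_ + _‖ ≤ ‖a (concat w.2 x) * (b (concat w.2 x) - b (concat w.2 y))‖ +
          ‖(a (concat w.2 x) - a (concat w.2 y)) * b (concat w.2 y)‖ := norm_add_le _ _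
      _ = ‖a (concat w.2 x)‖ * ‖b (concat w.2 x) - b (concat w.2 y)‖ +
          ‖a (concat w.2 x) - a (concat w.2 y)‖ * ‖b (concat w.2 y)‖ := by
            rw [norm_mul, norm_mul]
      _ ≤ ‖a‖ * ‖b (concat w.2 x) - b (concat w.2 y)‖ +
          ‖b‖ * ‖a (concat w.2 x) - a (concat w.2 y)‖ := by
            refine add_le_add ?_ ?_
            · exact mul_le_mul_of_nonneg_right (a.norm_coe_le_norm _) (norm_nonneg _)
            · rw [mul_comm ‖b‖]
              exact mul_le_mul_of_nonneg_left (b.norm_coe_le_norm _) (norm_nonneg _)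
  star_mem' := by
    intro a ha
    show Summable _
    have heq : (fun w : Words 𝒜 =>
        ‖(star a) (concat w.2 x) - (star a) (concat w.2 y)‖ / JBirk J (w.1 + 1) w.2 x)
        = fun w : Words 𝒜 =>
        ‖a (concat w.2 x) - a (concat w.2 y)‖ / JBirk J (w.1 + 1) w.2 x := by
      funext w
      rw [ContinuousMap.star_apply, ContinuousMap.star_apply, ← star_sub, norm_star]
    rw [heq]
    exact ha

end Aux

/-- denseness of `{a : ‖[D,L_a]‖ < ∞}`.
For a `g`-function `J` and fixed `x, y ∈ Ω`, the set `A₀` is a subalgebra of `C(Ω,ℂ)` closed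
under complex conjugation (i.e. it is the underlying set of a star subalgebra), contains all
locally constant functions, and is dense in `C(Ω,ℂ)` for the uniform norm. -/
theorem statement14 {𝒜 : Type} [Fintype 𝒜] [TopologicalSpace 𝒜] [DiscreteTopology 𝒜]
    (hcard : 2 ≤ Fintype.card 𝒜)
    (J : Omega 𝒜 → ℝ) (hJ : IsGFunction J) (x y : Omega 𝒜) :
    (∃ S : StarSubalgebra ℂ C(Omega 𝒜, ℂ), (S : Set C(Omega 𝒜, ℂ)) = A0 J x y) ∧
    (∀ a : C(Omega 𝒜, ℂ),
      (∃ n : ℕ, ∀ u v : Omega 𝒜, (∀ i < n, u i = v i) → a u = a v) → a ∈ A0 J x y) ∧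
    Dense (A0 J x y) := by
  refine ⟨⟨A0star J x y, rfl⟩, fun a ⟨n, hn⟩ => locConst_mem_A0 J x y a n hn, ?_⟩
  rw [Metric.dense_iff]
  intro a r hr
  obtain ⟨n, hn⟩ := uniform_approx (a : Omega 𝒜 → ℂ) a.continuous (half_pos hr)
  set trunc : Omega 𝒜 → Omega 𝒜 := fun u i => if i < n then u i else x i with htruncdef
  have htrunc : Continuous trunc := by
    refine continuous_pi fun i => ?_
    by_cases h : i < n
    · simpa [htruncdef, h] using continuous_apply i
    · simpa [htruncdef, h] using (continuous_const : Continuous fun _ : Omega 𝒜 => x i)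
  set b : C(Omega 𝒜, ℂ) := ⟨fun u => a (trunc u), a.continuous.comp htrunc⟩ with hbdef
  have hb : b ∈ A0 J x y := by
    refine locConst_mem_A0 J x y b n fun u v huv => ?_
    show a (trunc u) = a (trunc v)
    congr 1
    funext i
    simp only [htruncdef]
    split_ifs with h
    · exact huv i h
    · rfl
  have hdist : dist b a ≤ r / 2 := by
    rw [ContinuousMap.dist_le (half_pos hr).le]
    intro u
    rw [dist_eq_norm]
    refine hn (trunc u) u fun i hi => ?_
    simp [htruncdef, hi]
  exact ⟨b, Metric.mem_ball.2 (lt_of_le_of_lt hdist (by linarith)), hb⟩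


end GS
end
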